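/- In the same setting, for every N ≥ 1, the pairing of monomials in the F and E generators is given by the braided factorial: ⟨F^{q₁}···F^{q_N}, E_{a₁}···E_{a_N}⟩ = ([N!]_B)^{q₁···q_N}_{a₁···a_N}, where [N!]_B is defined recursively via the braided integers built from B^{ij}_{mn} = R^{ji}_{mn}. -/

import Mathlib

open TensorProduct Matrix

section YangBaxterAlgebra

variable (k : Type*) [Field k] (ι : Type*) [Fintype ι] [DecidableEq ι]
variable (Rm : Matrix (ι × ι) (ι × ι) k)

/-- `R ⊗ 1` acting on factors 1,2 of the triple tensor product (in components). -/
def M12 : Matrix (ι × ι × ι) (ι × ι × ι) k :=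
  fun a b => Rm (a.1, a.2.1) (b.1, b.2.1) * (if a.2.2 = b.2.2 then 1 else 0)

/-- `1 ⊗ R` acting on factors 2,3 of the triple tensor product (in components). -/
def M23 : Matrix (ι × ι × ι) (ι × ι × ι) k :=
  fun a b => (if a.1 = b.1 then (1 : k) else 0) * Rm (a.2.1, a.2.2) (b.2.1, b.2.2)

/-- `R` acting on factors 1,3 of the triple tensor product (in components). -/
def M13 : Matrix (ι × ι × ι) (ι × ι × ι) k :=
  fun a b => Rm (a.1, a.2.2) (b.1, b.2.2) * (if a.2.1 = b.2.1 then 1 else 0)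

/-- The Yang-Baxter equation `R₁₂R₁₃R₂₃ = R₂₃R₁₃R₁₂` in components. -/
def IsYangBaxter : Prop :=
  M12 k ι Rm * M13 k ι Rm * M23 k ι Rm = M23 k ι Rm * M13 k ι Rm * M12 k ι Rm

/-- Free generators: `Sum.inl (i,j)` is the matrix generator (`t^i_j` resp.
`u^i_j`), `Sum.inr i` is the extra generator (`E_i` resp. `F^i`). -/
abbrev YGen := (ι × ι) ⊕ ι

/-- The free matrix generator. -/
def tGen (i j : ι) : FreeAlgebra k (YGen ι) := FreeAlgebra.ι k (Sum.inl (i, j))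

/-- The free extra generator. -/
def eGen (i : ι) : FreeAlgebra k (YGen ι) := FreeAlgebra.ι k (Sum.inr i)

/-- Defining relations of `Y₋`: `R₁₂T₁T₂ = T₂T₁R₁₂` and `E₁T₂ = T₂E₁R₁₂`,
written in components. -/
inductive relMinus : FreeAlgebra k (YGen ι) → FreeAlgebra k (YGen ι) → Prop
  | rtt (i j m n : ι) : relMinus
      (∑ p : ι, ∑ q : ι, Rm (i, j) (p, q) • (tGen k ι p m * tGen k ι q n))
      (∑ p : ι, ∑ q : ι, Rm (p, q) (m, n) • (tGen k ι j q * tGen k ι i p))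
  | ret (j m n : ι) : relMinus
      (eGen k ι m * tGen k ι j n)
      (∑ p : ι, ∑ q : ι, Rm (p, q) (m, n) • (tGen k ι j q * eGen k ι p))

/-- Defining relations of `Y₊`: `R₁₂U₁U₂ = U₂U₁R₁₂` and `F₂U₁ = R₁₂U₁F₂`,
written in components. -/
inductive relPlus : FreeAlgebra k (YGen ι) → FreeAlgebra k (YGen ι) → Prop
  | ruu (i j m n : ι) : relPlus
      (∑ p : ι, ∑ q : ι, Rm (i, j) (p, q) • (tGen k ι p m * tGen k ι q n))
      (∑ p : ι, ∑ q : ι, Rm (p, q) (m, n) • (tGen k ι j q * tGen k ι i p))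
  | rfu (i j m : ι) : relPlus
      (eGen k ι j * tGen k ι i m)
      (∑ p : ι, ∑ q : ι, Rm (i, j) (p, q) • (tGen k ι p m * eGen k ι q))

/-- The Yang-Baxter bialgebra `Y₋` (generated by `t^i_j`, `E_i`). -/
abbrev Yminus := RingQuot (relMinus k ι Rm)

/-- The Yang-Baxter bialgebra `Y₊` (generated by `u^i_j`, `F^i`). -/
abbrev Yplus := RingQuot (relPlus k ι Rm)

/-- The generator `t^i_j` of `Y₋`. -/
def tM (i j : ι) : Yminus k ι Rm := RingQuot.mkAlgHom k (relMinus k ι Rm) (tGen k ι i j)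

/-- The generator `E_i` of `Y₋`. -/
def eM (i : ι) : Yminus k ι Rm := RingQuot.mkAlgHom k (relMinus k ι Rm) (eGen k ι i)

/-- The generator `u^i_j` of `Y₊`. -/
def uP (i j : ι) : Yplus k ι Rm := RingQuot.mkAlgHom k (relPlus k ι Rm) (tGen k ι i j)

/-- The generator `F^i` of `Y₊`. -/
def fP (i : ι) : Yplus k ι Rm := RingQuot.mkAlgHom k (relPlus k ι Rm) (eGen k ι i)

end YangBaxterAlgebra

/-- The pairing induced on tensor squares by bilinear pairings:
`⟨x ⊗ y, a ⊗ b⟩ = ⟨x, a⟩⟨y, b⟩`. -/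
noncomputable def tensorPairing {k A B : Type*} [CommRing k]
    [AddCommGroup A] [Module k A] [AddCommGroup B] [Module k B]
    (p q : B →ₗ[k] Module.Dual k A) :
    (B ⊗[k] B) →ₗ[k] Module.Dual k (A ⊗[k] A) :=
  TensorProduct.dualDistrib k A A ∘ₗ TensorProduct.map p q

section Pairing

variable {k : Type*} [Field k] {ι : Type*} [Fintype ι] [DecidableEq ι]
variable (Rm : Matrix (ι × ι) (ι × ι) k)

/-- The hypotheses on the skew pairing `⟨·,·⟩ : Y₊ ⊗ Y₋ → k` of the
Yang-Baxter bialgebras: its values on generators `⟨U,T⟩ = R`, `⟨F,E⟩ = 1`,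
`⟨1,T⟩ = ⟨U,1⟩ = 1`, all other pairings of generators zero, and the skew
pairing axioms with respect to the comultiplications `Dp`, `Dm`. -/
structure IsYBPairing
    (p : Yplus k ι Rm →ₗ[k] Module.Dual k (Yminus k ι Rm))
    (Dm : Yminus k ι Rm →ₐ[k] (Yminus k ι Rm ⊗[k] Yminus k ι Rm))
    (Dp : Yplus k ι Rm →ₐ[k] (Yplus k ι Rm ⊗[k] Yplus k ι Rm)) : Prop where
  comul_t : ∀ i j : ι, Dm (tM k ι Rm i j) = ∑ q : ι, tM k ι Rm i q ⊗ₜ[k] tM k ι Rm q j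
  comul_e : ∀ i : ι, Dm (eM k ι Rm i) =
    (∑ q : ι, eM k ι Rm q ⊗ₜ[k] tM k ι Rm q i) + 1 ⊗ₜ[k] eM k ι Rm i
  comul_u : ∀ i j : ι, Dp (uP k ι Rm i j) = ∑ q : ι, uP k ι Rm i q ⊗ₜ[k] uP k ι Rm q j
  comul_f : ∀ i : ι, Dp (fP k ι Rm i) =
    fP k ι Rm i ⊗ₜ[k] 1 + ∑ q : ι, uP k ι Rm i q ⊗ₜ[k] fP k ι Rm q
  pair_ut : ∀ i j m n : ι, p (uP k ι Rm i j) (tM k ι Rm m n) = Rm (i, m) (j, n)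
  pair_fe : ∀ i j : ι, p (fP k ι Rm i) (eM k ι Rm j) = if i = j then 1 else 0
  pair_one_t : ∀ i j : ι, p 1 (tM k ι Rm i j) = if i = j then 1 else 0
  pair_u_one : ∀ i j : ι, p (uP k ι Rm i j) 1 = if i = j then 1 else 0
  pair_one_one : p 1 1 = 1
  pair_f_one : ∀ i : ι, p (fP k ι Rm i) 1 = 0
  pair_one_e : ∀ i : ι, p 1 (eM k ι Rm i) = 0
  pair_ue : ∀ i j m : ι, p (uP k ι Rm i j) (eM k ι Rm m) = 0
  pair_ft : ∀ i m n : ι, p (fP k ι Rm i) (tM k ι Rm m n) = 0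
  skew_mul : ∀ (x y : Yplus k ι Rm) (a : Yminus k ι Rm),
    p (x * y) a = tensorPairing p p (x ⊗ₜ[k] y) (Dm a)
  skew_comul : ∀ (x : Yplus k ι Rm) (a b : Yminus k ι Rm),
    tensorPairing p p (Dp x) (a ⊗ₜ[k] b) = p x (b * a)

end Pairing

section Braided

variable {k : Type*} [Field k] {ι : Type*} [Fintype ι] [DecidableEq ι]

/-- The braid matrix `B` acting on tensor factors `i, i+1` (0-based) of the
`N`-fold tensor power (in components). -/
def Bop (B : Matrix (ι × ι) (ι × ι) k) (N i : ℕ) :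
    Matrix (Fin N → ι) (Fin N → ι) k :=
  if h : i + 1 < N then
    fun f g =>
      B (f ⟨i, Nat.lt_of_succ_lt h⟩, f ⟨i + 1, h⟩)
          (g ⟨i, Nat.lt_of_succ_lt h⟩, g ⟨i + 1, h⟩) *
        ∏ j : Fin N,
          if (j : ℕ) = i ∨ (j : ℕ) = i + 1 then 1 else (if f j = g j then (1 : k) else 0)
  else 1

/-- The descending products `1, B_{N-1}, B_{N-1}B_{N-2}, ...` (here `B_m` is the
braid matrix acting on factors `m, m+1`, 1-based). -/
def chainDesc (B : Matrix (ι × ι) (ι × ι) k) (N : ℕ) :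
    ℕ → Matrix (Fin N → ι) (Fin N → ι) k
  | 0 => 1
  | m + 1 => chainDesc B N m * Bop B N (N - 2 - m)

/-- The braided integer `[N]_B = 1 + B_{N-1} + B_{N-1}B_{N-2} + ⋯ + B_{N-1}⋯B_1`. -/
def braidedInt (B : Matrix (ι × ι) (ι × ι) k) (N : ℕ) :
    Matrix (Fin N → ι) (Fin N → ι) k :=
  ∑ m ∈ Finset.range N, chainDesc B N m

/-- Extension `M ↦ M ⊗ 1` of an operator on the `N`-fold tensor power to the
`(N+1)`-fold tensor power. -/
def extendLast {k : Type*} [Field k] {ι : Type*} [Fintype ι] [DecidableEq ι] {N : ℕ}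
    (M : Matrix (Fin N → ι) (Fin N → ι) k) :
    Matrix (Fin (N + 1) → ι) (Fin (N + 1) → ι) k :=
  fun f g => M (Fin.init f) (Fin.init g) * (if f (Fin.last N) = g (Fin.last N) then 1 else 0)

/-- The braided factorial: `[0!]_B = 1`, `[N!]_B = ([(N-1)!]_B ⊗ 1) [N]_B`. -/
def braidedFactorial (B : Matrix (ι × ι) (ι × ι) k) :
    (N : ℕ) → Matrix (Fin N → ι) (Fin N → ι) k
  | 0 => 1
  | N + 1 => extendLast (braidedFactorial B N) * braidedInt B (N + 1)

end Braided


/-! ### Auxiliary development for STATEMENT 13 -/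

section Stmt13Aux

open Finset

variable {k : Type*} [Field k] {ι : Type*} [Fintype ι] [DecidableEq ι]

lemma delta_mul_delta (P Q : Prop) [Decidable P] [Decidable Q] :
    (if P then (1 : k) else 0) * (if Q then 1 else 0) = if P ∧ Q then 1 else 0 := by
  by_cases hP : P <;> by_cases hQ : Q <;> simp [hP, hQ]

lemma prod_delta {n : ℕ} (f g : Fin n → ι) :
    (∏ s : Fin n, if f s = g s then (1 : k) else 0) = if f = g then 1 else 0 := by
  by_cases h : f = g
  · simp [h]
  · rw [if_neg h]
    obtain ⟨s, hs⟩ := Function.ne_iff.mp h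
    exact Finset.prod_eq_zero (Finset.mem_univ s) (if_neg hs)

/-- The equivalence `(Fin n → ι) × ι ≃ (Fin (n+1) → ι)` given by `snoc`. -/
def snocFunEquiv (ι : Type*) (n : ℕ) : ((Fin n → ι) × ι) ≃ (Fin (n + 1) → ι) where
  toFun pr := Fin.snoc pr.1 pr.2
  invFun g := (Fin.init g, g (Fin.last n))
  left_inv pr := by simp
  right_inv g := Fin.snoc_init_self g

lemma sum_snoc {M : Type*} [AddCommMonoid M] {n : ℕ} (f : (Fin (n + 1) → ι) → M) :
    ∑ g : Fin (n + 1) → ι, f g = ∑ g' : Fin n → ι, ∑ x : ι, f (Fin.snoc g' x) := by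
  rw [← Equiv.sum_comp (snocFunEquiv ι n) f, Fintype.sum_prod_type]
  rfl

lemma fun_eq_iff_init_last {α : Type*} {n : ℕ} (f g : Fin (n + 1) → α) :
    f = g ↔ Fin.init f = Fin.init g ∧ f (Fin.last n) = g (Fin.last n) := by
  constructor
  · rintro rfl; exact ⟨rfl, rfl⟩
  · rintro ⟨h1, h2⟩
    rw [← Fin.snoc_init_self f, ← Fin.snoc_init_self g, h1, h2]

lemma prod_ofFn_erase_one {M : Type*} [Monoid M] :
    ∀ {n : ℕ} (j : Fin (n + 1)) (g : Fin (n + 1) → M), g j = 1 →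
      (List.ofFn g).prod = (List.ofFn fun s => g (j.succAbove s)).prod := by
  intro n
  induction n with
  | zero =>
    intro j g hg
    have hj : j = 0 := Fin.ext (by omega)
    subst hj
    simp [List.ofFn_succ, hg]
  | succ n ih =>
    intro j g hg
    induction j using Fin.cases with
    | zero => simp [List.ofFn_succ, hg, Fin.zero_succAbove]
    | succ j' =>
      rw [List.ofFn_succ, List.ofFn_succ (f := fun s => g (j'.succ.succAbove s))]
      simp only [Fin.succ_succAbove_zero, Fin.succ_succAbove_succ]
      rw [List.prod_cons, List.prod_cons]
      congr 1
      exact ih j' (fun s => g s.succ) hg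

lemma init_insertNth {α : Type*} {n : ℕ} (j : Fin (n + 1)) (x : α) (f : Fin (n + 1) → α) :
    Fin.init (Fin.insertNth (α := fun _ => α) j.castSucc x f)
      = Fin.insertNth (α := fun _ => α) j x (Fin.init f) := by
  funext s
  refine Fin.succAboveCases j ?_ ?_ s
  · show Fin.insertNth (α := fun _ => α) j.castSucc x f j.castSucc = _
    rw [Fin.insertNth_apply_same, Fin.insertNth_apply_same]
  · intro t
    show Fin.insertNth (α := fun _ => α) j.castSucc x f (j.succAbove t).castSucc = _
    rw [Fin.insertNth_apply_succAbove, ← Fin.castSucc_succAbove_castSucc,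
      Fin.insertNth_apply_succAbove]
    rfl

lemma castSucc_succAbove_last {n : ℕ} (j : Fin (n + 1)) :
    j.castSucc.succAbove (Fin.last n) = Fin.last (n + 1) := by
  rw [Fin.succAbove_of_le_castSucc _ _
    (Fin.castSucc_le_castSucc_iff.mpr (Fin.le_last j)), Fin.succ_last]

/-! ### Combinatorial values of the pairing -/

/-- The value of `⟨1, ·⟩` on a mixed `T`/`E` word. -/
def val1 (k : Type*) [Field k] {ι : Type*} [Fintype ι] [DecidableEq ι] {n : ℕ}
    (c : Fin n → Option ι) (a : Fin n → ι) : k :=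
  ∏ s, if c s = some (a s) then 1 else 0

/-- The value of `⟨F^i, ·⟩` on a mixed `T`/`E` word. -/
def valF (Rm : Matrix (ι × ι) (ι × ι) k) :
    (n : ℕ) → ι → (Fin n → Option ι) → (Fin n → ι) → k
  | 0, _, _, _ => 0
  | n + 1, i, c, a =>
    match c (Fin.last n) with
    | some m => ∑ r : ι, Rm (i, m) (r, a (Fin.last n)) * valF Rm n r (Fin.init c) (Fin.init a)
    | none => (if i = a (Fin.last n) then 1 else 0) * val1 k (Fin.init c) (Fin.init a)

lemma val1_succ {n : ℕ} (c : Fin (n + 1) → Option ι) (a : Fin (n + 1) → ι) :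
    val1 k c a = (if c 0 = some (a 0) then (1 : k) else 0)
      * val1 k (fun s => c s.succ) (fun s => a s.succ) := by
  show (∏ s : Fin (n + 1), if c s = some (a s) then (1 : k) else 0) = _
  rw [Fin.prod_univ_succ]
  rfl

lemma valF_succ_none {Rm : Matrix (ι × ι) (ι × ι) k} {n : ℕ} (i : ι)
    (c : Fin (n + 1) → Option ι) (a : Fin (n + 1) → ι) (h : c (Fin.last n) = none) :
    valF Rm (n + 1) i c a
      = (if i = a (Fin.last n) then 1 else 0) * val1 k (Fin.init c) (Fin.init a) := by
  simp only [valF, h]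

lemma valF_succ_some {Rm : Matrix (ι × ι) (ι × ι) k} {n : ℕ} (i m' : ι)
    (c : Fin (n + 1) → Option ι) (a : Fin (n + 1) → ι) (h : c (Fin.last n) = some m') :
    valF Rm (n + 1) i c a
      = ∑ r : ι, Rm (i, m') (r, a (Fin.last n)) * valF Rm n r (Fin.init c) (Fin.init a) := by
  simp only [valF, h]

/-- The pattern with a single `none` at position `j`. -/
def phiN {n : ℕ} (j : Fin (n + 1)) (m : Fin n → ι) : Fin (n + 1) → Option ι :=
  Fin.insertNth (α := fun _ => Option ι) j none (fun s => some (m s))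

lemma phiN_apply_same {n : ℕ} (j : Fin (n + 1)) (m : Fin n → ι) : phiN j m j = none := by
  simp [phiN]

lemma phiN_apply_succAbove {n : ℕ} (j : Fin (n + 1)) (m : Fin n → ι) (s : Fin n) :
    phiN j m (j.succAbove s) = some (m s) := by
  simp [phiN]

lemma val1_none {n : ℕ} (c : Fin n → Option ι) (a : Fin n → ι) (s₀ : Fin n)
    (h : c s₀ = none) : val1 k c a = 0 :=
  Finset.prod_eq_zero (Finset.mem_univ s₀) (by simp [h])

lemma valF_two_none {Rm : Matrix (ι × ι) (ι × ι) k} :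
    ∀ {n : ℕ} (i : ι) (c : Fin n → Option ι) (a : Fin n → ι) (s₁ s₂ : Fin n),
      s₁ ≠ s₂ → c s₁ = none → c s₂ = none → valF Rm n i c a = 0 := by
  intro n
  induction n with
  | zero => intro _ _ _ s₁ _ _ _ _; exact s₁.elim0
  | succ n ih =>
    intro i c a s₁ s₂ hne h1 h2
    rcases hc : c (Fin.last n) with _ | m
    · -- last entry is none; one of s₁, s₂ is a different none
      have : ∃ s, s ≠ Fin.last n ∧ c s = none := by
        by_cases hs1 : s₁ = Fin.last n
        · exact ⟨s₂, by rw [← hs1]; exact fun h => hne h.symm, h2⟩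
        · exact ⟨s₁, hs1, h1⟩
      obtain ⟨s, hs, hcs⟩ := this
      have hinit : Fin.init c (s.castPred hs) = none := by
        show c ((s.castPred hs).castSucc) = none
        rw [Fin.castSucc_castPred]; exact hcs
      simp [valF, hc, val1_none _ _ _ hinit]
    · have hs1 : s₁ ≠ Fin.last n := fun h => by rw [h, hc] at h1; exact absurd h1 (Option.some_ne_none _)
      have hs2 : s₂ ≠ Fin.last n := fun h => by rw [h, hc] at h2; exact absurd h2 (Option.some_ne_none _)
      have hne' : s₁.castPred hs1 ≠ s₂.castPred hs2 := by
        intro h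
        apply hne
        rw [← Fin.castSucc_castPred s₁ hs1, ← Fin.castSucc_castPred s₂ hs2, h]
      have h1' : Fin.init c (s₁.castPred hs1) = none := by
        show c ((s₁.castPred hs1).castSucc) = none
        rw [Fin.castSucc_castPred]; exact h1
      have h2' : Fin.init c (s₂.castPred hs2) = none := by
        show c ((s₂.castPred hs2).castSucc) = none
        rw [Fin.castSucc_castPred]; exact h2
      simp only [valF, hc]
      apply Finset.sum_eq_zero
      intro r _
      rw [ih r (Fin.init c) (Fin.init a) _ _ hne' h1' h2', mul_zero]

lemma sum_phiN_eq {n : ℕ} (f : (Fin (n + 1) → Option ι) → k)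
    (h0 : ∀ c, (∀ s, c s ≠ none) → f c = 0)
    (h2 : ∀ c (s₁ s₂ : Fin (n + 1)), s₁ ≠ s₂ → c s₁ = none → c s₂ = none → f c = 0) :
    ∑ c, f c = ∑ j : Fin (n + 1), ∑ m : Fin n → ι, f (phiN j m) := by
  classical
  have hinj : ∀ pr ∈ (Finset.univ : Finset (Fin (n + 1) × (Fin n → ι))),
      ∀ pr' ∈ (Finset.univ : Finset (Fin (n + 1) × (Fin n → ι))),
      (fun pr : Fin (n + 1) × (Fin n → ι) => phiN pr.1 pr.2) pr
        = (fun pr : Fin (n + 1) × (Fin n → ι) => phiN pr.1 pr.2) pr' → pr = pr' := by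
    rintro ⟨j, m⟩ - ⟨j', m'⟩ - h
    simp only at h
    have hjj : j = j' := by
      by_contra hne
      obtain ⟨t, ht⟩ := Fin.exists_succAbove_eq (show j' ≠ j from fun h' => hne h'.symm)
      have e1 : phiN j m j' = some (m t) := by rw [← ht, phiN_apply_succAbove]
      have e2 : phiN j' m' j' = none := phiN_apply_same j' m'
      rw [h, e2] at e1
      exact absurd e1.symm (Option.some_ne_none _)
    subst hjj
    have hm : m = m' := by
      funext s
      have := congrFun h (j.succAbove s)
      rw [phiN_apply_succAbove, phiN_apply_succAbove] at this
      exact Option.some.inj this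
    rw [hm]
  calc ∑ c, f c
      = ∑ c ∈ (Finset.univ.image
          (fun pr : Fin (n + 1) × (Fin n → ι) => phiN pr.1 pr.2)), f c := by
        refine (Finset.sum_subset (Finset.subset_univ _) ?_).symm
        intro c _ hc
        by_cases h1 : ∃ s, c s = none
        · obtain ⟨s₀, hs₀⟩ := h1
          by_cases huniq : ∀ s, c s = none → s = s₀
          · exfalso
            apply hc
            refine Finset.mem_image.mpr ⟨⟨s₀, fun t => (c (s₀.succAbove t)).get ?_⟩,
              Finset.mem_univ _, ?_⟩
            · rw [← Option.ne_none_iff_isSome]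
              intro h
              exact Fin.succAbove_ne s₀ t (huniq _ h)
            · funext s
              refine Fin.succAboveCases s₀ ?_ ?_ s
              · rw [phiN_apply_same, hs₀]
              · intro t
                rw [phiN_apply_succAbove]
                exact Option.some_get _
          · push_neg at huniq
            obtain ⟨s₁, hs₁, hne⟩ := huniq
            exact h2 c s₁ s₀ hne hs₁ hs₀
        · push_neg at h1
          exact h0 c h1
    _ = ∑ pr : Fin (n + 1) × (Fin n → ι), f (phiN pr.1 pr.2) := Finset.sum_image hinj
    _ = ∑ j : Fin (n + 1), ∑ m : Fin n → ι, f (phiN j m) := Fintype.sum_prod_type _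

/-! ### Braided factorial lemmas -/

lemma extendLast_one {n : ℕ} :
    extendLast (1 : Matrix (Fin n → ι) (Fin n → ι) k) = 1 := by
  funext f g
  simp only [extendLast, Matrix.one_apply]
  rw [delta_mul_delta]
  exact if_congr (fun_eq_iff_init_last f g).symm rfl rfl

lemma extendLast_mul {n : ℕ} (M N : Matrix (Fin n → ι) (Fin n → ι) k) :
    extendLast (M * N) = extendLast M * extendLast N := by
  funext f g
  rw [Matrix.mul_apply, sum_snoc (fun h => extendLast M f h * extendLast N h g)]
  simp only [extendLast, Fin.init_snoc, Fin.snoc_last]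
  rw [Matrix.mul_apply, Finset.sum_mul]
  refine Finset.sum_congr rfl fun h' _ => ?_
  rw [Finset.sum_eq_single (f (Fin.last n))]
  · simp [mul_assoc, mul_comm, mul_left_comm]
  · intro x _ hx
    simp [Ne.symm hx]
  · intro hmem
    exact absurd (Finset.mem_univ _) hmem

lemma bop_extend {n i : ℕ} (B : Matrix (ι × ι) (ι × ι) k) (h : i + 1 < n) :
    Bop B (n + 1) i = extendLast (Bop B n i) := by
  funext f g
  rw [extendLast, Bop, Bop]
  erw [dif_pos (show i + 1 < n + 1 by omega), dif_pos h]
  rw [Fin.prod_univ_castSucc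
    (f := fun j : Fin (n + 1) => if (j : ℕ) = i ∨ (j : ℕ) = i + 1 then (1 : k)
      else if f j = g j then 1 else 0)]
  rw [if_neg (show ¬(((Fin.last n : Fin (n + 1)) : ℕ) = i
      ∨ ((Fin.last n : Fin (n + 1)) : ℕ) = i + 1) by
    simp only [Fin.val_last]; omega)]
  have hprod : (∏ x : Fin n, if ((x.castSucc : Fin (n + 1)) : ℕ) = i
        ∨ ((x.castSucc : Fin (n + 1)) : ℕ) = i + 1 then (1 : k)
      else if f x.castSucc = g x.castSucc then 1 else 0)
      = ∏ x : Fin n, if (x : ℕ) = i ∨ (x : ℕ) = i + 1 then (1 : k)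
          else if Fin.init f x = Fin.init g x then 1 else 0 := by
    refine Finset.prod_congr rfl fun x _ => ?_
    rw [Fin.coe_castSucc]
    rfl
  rw [hprod, ← mul_assoc]
  rfl

lemma chain_pull (B : Matrix (ι × ι) (ι × ι) k) (n : ℕ) :
    ∀ t : ℕ, t ≤ n →
      chainDesc B (n + 2) (t + 1) = Bop B (n + 2) n * extendLast (chainDesc B (n + 1) t) := by
  intro t
  induction t with
  | zero =>
    intro _
    show chainDesc B (n + 2) 0 * Bop B (n + 2) (n + 2 - 2 - 0) = _
    rw [show chainDesc B (n + 2) 0 = 1 from rfl,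
      show chainDesc B (n + 1) 0 = 1 from rfl, extendLast_one]
    rw [one_mul, mul_one]
    congr 1
  | succ t ih =>
    intro ht
    show chainDesc B (n + 2) (t + 1) * Bop B (n + 2) (n + 2 - 2 - (t + 1)) = _
    rw [ih (by omega)]
    rw [show n + 2 - 2 - (t + 1) = n - (t + 1) from by omega]
    rw [bop_extend B (show (n - (t + 1)) + 1 < n + 1 by omega), mul_assoc, ← extendLast_mul]
    have hstep : chainDesc B (n + 1) t * Bop B (n + 1) (n - (t + 1))
        = chainDesc B (n + 1) (t + 1) := by
      show _ = chainDesc B (n + 1) t * Bop B (n + 1) (n + 1 - 2 - t)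
      rw [show n + 1 - 2 - t = n - (t + 1) from by omega]
    rw [hstep]

lemma sum_delta_fun_mul {n : ℕ} (b : Fin n → ι) (F : (Fin n → ι) → k) :
    ∑ g : Fin n → ι, (if b = g then (1 : k) else 0) * F g = F b := by
  simp

lemma Bop_top_apply {n : ℕ} (B : Matrix (ι × ι) (ι × ι) k) (f g : Fin (n + 2) → ι) :
    Bop B (n + 2) n f g
      = B (f (Fin.last n).castSucc, f (Fin.last (n + 1)))
          (g (Fin.last n).castSucc, g (Fin.last (n + 1)))
        * (if Fin.init (Fin.init f) = Fin.init (Fin.init g) then (1 : k) else 0) := by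
  rw [Bop]
  erw [dif_pos (by omega : n + 1 < n + 2)]
  have e1 : ∀ h : n < n + 2, (⟨n, h⟩ : Fin (n + 2)) = (Fin.last n).castSucc :=
    fun h => Fin.ext (by simp)
  have e2 : ∀ h : n + 1 < n + 2, (⟨n + 1, h⟩ : Fin (n + 2)) = Fin.last (n + 1) :=
    fun h => Fin.ext (by simp)
  rw [e1, e2]
  congr 1
  rw [Fin.prod_univ_castSucc
    (f := fun j : Fin (n + 2) => if (j : ℕ) = n ∨ (j : ℕ) = n + 1 then (1 : k)
      else if f j = g j then 1 else 0)]
  rw [Fin.prod_univ_castSucc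
    (f := fun j : Fin (n + 1) => if ((j.castSucc : Fin (n + 2)) : ℕ) = n
        ∨ ((j.castSucc : Fin (n + 2)) : ℕ) = n + 1 then (1 : k)
      else if f j.castSucc = g j.castSucc then 1 else 0)]
  rw [if_pos (by simp : ((Fin.last (n + 1) : Fin (n + 2)) : ℕ) = n
      ∨ ((Fin.last (n + 1) : Fin (n + 2)) : ℕ) = n + 1)]
  rw [if_pos (by simp : (((Fin.last n).castSucc : Fin (n + 2)) : ℕ) = n
      ∨ (((Fin.last n).castSucc : Fin (n + 2)) : ℕ) = n + 1)]
  rw [mul_one, mul_one, ← prod_delta (Fin.init (Fin.init f)) (Fin.init (Fin.init g))]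
  refine Finset.prod_congr rfl fun j _ => ?_
  have hne : ¬(((j.castSucc.castSucc : Fin (n + 2)) : ℕ) = n
      ∨ ((j.castSucc.castSucc : Fin (n + 2)) : ℕ) = n + 1) := by
    simp only [Fin.coe_castSucc]
    omega
  rw [if_neg hne]
  rfl

lemma bop_mul_extendLast_apply {n : ℕ} (B : Matrix (ι × ι) (ι × ι) k)
    (M : Matrix (Fin (n + 1) → ι) (Fin (n + 1) → ι) k)
    (m : Fin (n + 1) → ι) (i : ι) (a : Fin (n + 2) → ι) :
    (Bop B (n + 2) n * extendLast M) (Fin.snoc m i) a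
      = ∑ r : ι, B (m (Fin.last n), i) (r, a (Fin.last (n + 1)))
          * M (Fin.snoc (Fin.init m) r) (Fin.init a) := by
  rw [Matrix.mul_apply,
    sum_snoc (fun g => Bop B (n + 2) n (Fin.snoc m i) g * extendLast M g a),
    sum_snoc (fun g' => ∑ y : ι, Bop B (n + 2) n (Fin.snoc m i) (Fin.snoc g' y)
      * extendLast M (Fin.snoc g' y) a)]
  have hterm : ∀ (g'' : Fin n → ι) (x y : ι),
      Bop B (n + 2) n (Fin.snoc m i) (Fin.snoc (Fin.snoc g'' x) y)
          * extendLast M (Fin.snoc (Fin.snoc g'' x) y) a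
        = (if Fin.init m = g'' then (1 : k) else 0)
            * ((if y = a (Fin.last (n + 1)) then (1 : k) else 0)
              * (B (m (Fin.last n), i) (x, y) * M (Fin.snoc g'' x) (Fin.init a))) := by
    intro g'' x y
    rw [Bop_top_apply, extendLast]
    rw [Fin.snoc_castSucc, Fin.snoc_last, Fin.snoc_castSucc, Fin.snoc_last,
      Fin.init_snoc, Fin.init_snoc, Fin.init_snoc, Fin.snoc_last]
    ring
  calc ∑ g'' : Fin n → ι, ∑ x : ι, ∑ y : ι,
        Bop B (n + 2) n (Fin.snoc m i) (Fin.snoc (Fin.snoc g'' x) y)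
          * extendLast M (Fin.snoc (Fin.snoc g'' x) y) a
      = ∑ g'' : Fin n → ι, (if Fin.init m = g'' then (1 : k) else 0)
          * ∑ x : ι, ∑ y : ι, (if y = a (Fin.last (n + 1)) then (1 : k) else 0)
            * (B (m (Fin.last n), i) (x, y) * M (Fin.snoc g'' x) (Fin.init a)) := by
        refine Finset.sum_congr rfl fun g'' _ => ?_
        rw [Finset.mul_sum]
        refine Finset.sum_congr rfl fun x _ => ?_
        rw [Finset.mul_sum]
        exact Finset.sum_congr rfl fun y _ => hterm g'' x y
    _ = ∑ x : ι, ∑ y : ι, (if y = a (Fin.last (n + 1)) then (1 : k) else 0)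
          * (B (m (Fin.last n), i) (x, y) * M (Fin.snoc (Fin.init m) x) (Fin.init a)) := by
        rw [sum_delta_fun_mul (Fin.init m)
          (fun g'' => ∑ x : ι, ∑ y : ι, (if y = a (Fin.last (n + 1)) then (1 : k) else 0)
            * (B (m (Fin.last n), i) (x, y) * M (Fin.snoc g'' x) (Fin.init a)))]
    _ = ∑ r : ι, B (m (Fin.last n), i) (r, a (Fin.last (n + 1)))
          * M (Fin.snoc (Fin.init m) r) (Fin.init a) := by
        refine Finset.sum_congr rfl fun x _ => ?_
        rw [Finset.sum_eq_single (a (Fin.last (n + 1)))]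
        · rw [if_pos rfl, one_mul]
        · intro y _ hy
          rw [if_neg hy, zero_mul]
        · intro hmem
          exact absurd (Finset.mem_univ _) hmem

/-! ### The key combinatorial identity -/

lemma star_last {Rm B : Matrix (ι × ι) (ι × ι) k} (n : ℕ) (m : Fin n → ι) (i : ι)
    (a : Fin (n + 1) → ι) :
    valF Rm (n + 1) i (phiN (Fin.last n) m) a = chainDesc B (n + 1) 0 (Fin.snoc m i) a := by
  have hphi : phiN (Fin.last n) m = Fin.snoc (fun s => some (m s)) none := by
    rw [phiN, Fin.insertNth_last']
  rw [hphi, valF_succ_none i _ a (Fin.snoc_last _ _), Fin.init_snoc]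
  rw [show chainDesc B (n + 1) 0 = 1 from rfl]
  have hval : val1 k (fun s : Fin n => some (m s)) (Fin.init a)
      = if m = Fin.init a then 1 else 0 := by
    rw [val1, ← prod_delta m (Fin.init a)]
    exact Finset.prod_congr rfl fun s _ => by simp
  rw [hval, delta_mul_delta, Matrix.one_apply]
  refine if_congr ?_ rfl rfl
  rw [fun_eq_iff_init_last (Fin.snoc m i) a, Fin.init_snoc, Fin.snoc_last]
  exact ⟨fun ⟨h1, h2⟩ => ⟨h2, h1⟩, fun ⟨h1, h2⟩ => ⟨h2, h1⟩⟩

lemma star_lemma (Rm B : Matrix (ι × ι) (ι × ι) k)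
    (hB : ∀ x y z w : ι, B (x, y) (z, w) = Rm (y, x) (z, w)) :
    ∀ (n : ℕ) (j : Fin (n + 1)) (m : Fin n → ι) (i : ι) (a : Fin (n + 1) → ι),
      valF Rm (n + 1) i (phiN j m) a
        = chainDesc B (n + 1) (n - (j : ℕ)) (Fin.snoc m i) a := by
  intro n
  induction n with
  | zero =>
    intro j m i a
    have hj : j = Fin.last 0 := Fin.ext (by omega)
    subst hj
    rw [show (0 : ℕ) - ((Fin.last 0 : Fin 1) : ℕ) = 0 from rfl]
    exact star_last 0 m i a
  | succ n ih =>
    intro j m i a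
    induction j using Fin.lastCases with
    | last =>
      rw [show (n + 1) - ((Fin.last (n + 1) : Fin (n + 2)) : ℕ) = 0 by simp]
      exact star_last (n + 1) m i a
    | cast j' =>
      have hlt : (j' : ℕ) ≤ n := Nat.lt_succ_iff.mp j'.isLt
      have hc_last : phiN j'.castSucc m (Fin.last (n + 1)) = some (m (Fin.last n)) := by
        rw [← castSucc_succAbove_last j', phiN_apply_succAbove]
      have hinit : Fin.init (phiN j'.castSucc m) = phiN j' (Fin.init m) := by
        rw [phiN, init_insertNth, phiN]
        congr 1
      have hLHS : valF Rm (n + 2) i (phiN j'.castSucc m) a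
          = ∑ r : ι, Rm (i, m (Fin.last n)) (r, a (Fin.last (n + 1)))
            * valF Rm (n + 1) r (phiN j' (Fin.init m)) (Fin.init a) := by
        rw [valF_succ_some i (m (Fin.last n)) _ a hc_last, hinit]
      rw [hLHS]
      have ecoe : ((j'.castSucc : Fin (n + 2)) : ℕ) = (j' : ℕ) := rfl
      have esub : (n + 1) - ((j'.castSucc : Fin (n + 2)) : ℕ) = (n - (j' : ℕ)) + 1 := by
        rw [ecoe]; omega
      rw [esub, chain_pull B n (n - (j' : ℕ)) (by omega), bop_mul_extendLast_apply]
      refine Finset.sum_congr rfl fun r _ => ?_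
      rw [hB, ih j' (Fin.init m) r (Fin.init a)]

/-! ### Expansion of the braided factorial -/

lemma bF_succ_expand {n : ℕ} (B : Matrix (ι × ι) (ι × ι) k) (q a : Fin (n + 1) → ι) :
    braidedFactorial B (n + 1) q a
      = ∑ j : Fin (n + 1), ∑ m : Fin n → ι,
          braidedFactorial B n (Fin.init q) m
            * chainDesc B (n + 1) (n - (j : ℕ)) (Fin.snoc m (q (Fin.last n))) a := by
  rw [show braidedFactorial B (n + 1)
      = extendLast (braidedFactorial B n) * braidedInt B (n + 1) from rfl]
  rw [Matrix.mul_apply,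
    sum_snoc (fun c' => extendLast (braidedFactorial B n) q c' * braidedInt B (n + 1) c' a)]
  have hterm : ∀ (m : Fin n → ι) (x : ι),
      extendLast (braidedFactorial B n) q (Fin.snoc m x)
        = braidedFactorial B n (Fin.init q) m * (if x = q (Fin.last n) then 1 else 0) := by
    intro m x
    rw [extendLast, Fin.init_snoc, Fin.snoc_last]
    congr 1
    by_cases h : x = q (Fin.last n)
    · rw [if_pos h, if_pos h.symm]
    · rw [if_neg h, if_neg fun h' => h h'.symm]
  have step1 : ∑ m : Fin n → ι, ∑ x : ι,
      extendLast (braidedFactorial B n) q (Fin.snoc m x) * braidedInt B (n + 1) (Fin.snoc m x) a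
      = ∑ m : Fin n → ι, braidedFactorial B n (Fin.init q) m
          * braidedInt B (n + 1) (Fin.snoc m (q (Fin.last n))) a := by
    refine Finset.sum_congr rfl fun m _ => ?_
    rw [Finset.sum_eq_single (q (Fin.last n))]
    · rw [hterm, if_pos rfl, mul_one]
    · intro x _ hx
      rw [hterm, if_neg hx, mul_zero, zero_mul]
    · intro hmem
      exact absurd (Finset.mem_univ _) hmem
  rw [step1]
  have hint : ∀ m : Fin n → ι,
      braidedInt B (n + 1) (Fin.snoc m (q (Fin.last n))) a
        = ∑ j : Fin (n + 1), chainDesc B (n + 1) (n - (j : ℕ)) (Fin.snoc m (q (Fin.last n))) a := by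
    intro m
    rw [braidedInt, Matrix.sum_apply, ← Finset.sum_range_reflect,
      Fin.sum_univ_eq_sum_range
        (fun t => chainDesc B (n + 1) (n - t) (Fin.snoc m (q (Fin.last n))) a) (n + 1)]
    refine Finset.sum_congr rfl fun t _ => ?_
    rw [show n + 1 - 1 - t = n - t from by omega]
  have hfin : ∑ m : Fin n → ι, braidedFactorial B n (Fin.init q) m
        * braidedInt B (n + 1) (Fin.snoc m (q (Fin.last n))) a
      = ∑ m : Fin n → ι, ∑ j : Fin (n + 1), braidedFactorial B n (Fin.init q) m
          * chainDesc B (n + 1) (n - (j : ℕ)) (Fin.snoc m (q (Fin.last n))) a := by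
    refine Finset.sum_congr rfl fun m _ => ?_
    rw [hint m, Finset.mul_sum]
  rw [hfin, Finset.sum_comm]

/-! ### Algebraic lemmas about the pairing -/

lemma tensorPairing_tmul {k A B : Type*} [CommRing k]
    [AddCommGroup A] [Module k A] [AddCommGroup B] [Module k B]
    (p q : B →ₗ[k] Module.Dual k A) (x y : B) (a b : A) :
    tensorPairing p q (x ⊗ₜ[k] y) (a ⊗ₜ[k] b) = p x a * q y b := by
  simp [tensorPairing]

section AlgebraLemmas

variable {Rm : Matrix (ι × ι) (ι × ι) k}
variable {p : Yplus k ι Rm →ₗ[k] Module.Dual k (Yminus k ι Rm)}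
variable {Dm : Yminus k ι Rm →ₐ[k] (Yminus k ι Rm ⊗[k] Yminus k ι Rm)}
variable {Dp : Yplus k ι Rm →ₐ[k] (Yplus k ι Rm ⊗[k] Yplus k ι Rm)}

/-- The word `E_{a₀}⋯E_{a_{n-1}}`. -/
def Ew (Rm : Matrix (ι × ι) (ι × ι) k) {n : ℕ} (a : Fin n → ι) : Yminus k ι Rm :=
  (List.ofFn fun s => eM k ι Rm (a s)).prod

/-- The word `F^{q₀}⋯F^{q_{n-1}}`. -/
def Fw (Rm : Matrix (ι × ι) (ι × ι) k) {n : ℕ} (q : Fin n → ι) : Yplus k ι Rm :=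
  (List.ofFn fun s => fP k ι Rm (q s)).prod

/-- Left-leg generator of the coproduct of an `E`-word. -/
def Lgen (Rm : Matrix (ι × ι) (ι × ι) k) (o : Option ι) : Yminus k ι Rm :=
  match o with
  | some m' => eM k ι Rm m'
  | none => 1

/-- Right-leg generator of the coproduct of an `E`-word. -/
def Rgen (Rm : Matrix (ι × ι) (ι × ι) k) (o : Option ι) (b : ι) : Yminus k ι Rm :=
  match o with
  | some m' => tM k ι Rm m' b
  | none => eM k ι Rm b

/-- Left-leg word. -/
def Lw (Rm : Matrix (ι × ι) (ι × ι) k) {n : ℕ} (c : Fin n → Option ι) : Yminus k ι Rm :=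
  (List.ofFn fun s => Lgen Rm (c s)).prod

/-- Right-leg word. -/
def Rw (Rm : Matrix (ι × ι) (ι × ι) k) {n : ℕ} (c : Fin n → Option ι) (a : Fin n → ι) :
    Yminus k ι Rm :=
  (List.ofFn fun s => Rgen Rm (c s) (a s)).prod

variable (hp : IsYBPairing Rm p Dm Dp)
include hp

lemma pair_one_mul (a b : Yminus k ι Rm) : p 1 (a * b) = p 1 a * p 1 b := by
  have h := hp.skew_comul 1 b a
  rw [_root_.map_one, Algebra.TensorProduct.one_def, tensorPairing_tmul] at h
  rw [← h, mul_comm]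

lemma pair_f_mul_t (i m b : ι) (w : Yminus k ι Rm) :
    p (fP k ι Rm i) (w * tM k ι Rm m b)
      = ∑ r : ι, Rm (i, m) (r, b) * p (fP k ι Rm r) w := by
  have h := hp.skew_comul (fP k ι Rm i) (tM k ι Rm m b) w
  rw [hp.comul_f] at h
  simp only [map_add, map_sum, LinearMap.add_apply, LinearMap.sum_apply,
    tensorPairing_tmul, hp.pair_ft, hp.pair_ut, zero_mul, zero_add] at h
  rw [← h]

lemma pair_f_mul_e (i b : ι) (w : Yminus k ι Rm) :
    p (fP k ι Rm i) (w * eM k ι Rm b) = (if i = b then 1 else 0) * p 1 w := by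
  have h := hp.skew_comul (fP k ι Rm i) (eM k ι Rm b) w
  rw [hp.comul_f] at h
  simp only [map_add, map_sum, LinearMap.add_apply, LinearMap.sum_apply,
    tensorPairing_tmul, hp.pair_fe, hp.pair_ue, zero_mul, Finset.sum_const_zero,
    add_zero] at h
  rw [← h]

lemma pair_one_Rw : ∀ {n : ℕ} (c : Fin n → Option ι) (a : Fin n → ι),
    p 1 (Rw Rm c a) = val1 k c a := by
  intro n
  induction n with
  | zero =>
    intro c a
    rw [show Rw Rm c a = 1 by rw [Rw, List.ofFn_zero, List.prod_nil]]
    rw [hp.pair_one_one]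
    simp [val1]
  | succ n ih =>
    intro c a
    have hsplit : Rw Rm c a
        = Rgen Rm (c 0) (a 0) * Rw Rm (fun s => c s.succ) (fun s => a s.succ) := by
      rw [Rw, List.ofFn_succ, List.prod_cons]; rfl
    rw [hsplit, pair_one_mul hp, ih]
    have hgen : p 1 (Rgen Rm (c 0) (a 0)) = if c 0 = some (a 0) then 1 else 0 := by
      rcases hc : c 0 with _ | m'
      · rw [show Rgen Rm none (a 0) = eM k ι Rm (a 0) from rfl, hp.pair_one_e]
        simp
      · rw [show Rgen Rm (some m') (a 0) = tM k ι Rm m' (a 0) from rfl, hp.pair_one_t]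
        simp
    rw [hgen, val1_succ]

lemma pair_f_Rw : ∀ {n : ℕ} (i : ι) (c : Fin n → Option ι) (a : Fin n → ι),
    p (fP k ι Rm i) (Rw Rm c a) = valF Rm n i c a := by
  intro n
  induction n with
  | zero =>
    intro i c a
    rw [show Rw Rm c a = 1 by rw [Rw, List.ofFn_zero, List.prod_nil], hp.pair_f_one]
    rfl
  | succ n ih =>
    intro i c a
    have hsplit : Rw Rm c a
        = Rw Rm (Fin.init c) (Fin.init a) * Rgen Rm (c (Fin.last n)) (a (Fin.last n)) := by
      rw [Rw, List.ofFn_succ', List.prod_concat]; rfl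
    rcases hc : c (Fin.last n) with _ | m'
    · rw [hsplit, hc, show Rgen Rm none (a (Fin.last n)) = eM k ι Rm (a (Fin.last n)) from rfl,
        pair_f_mul_e hp, pair_one_Rw hp, valF_succ_none i c a hc]
    · rw [hsplit, hc,
        show Rgen Rm (some m') (a (Fin.last n)) = tM k ι Rm m' (a (Fin.last n)) from rfl,
        pair_f_mul_t hp, valF_succ_some i m' c a hc]
      exact Finset.sum_congr rfl fun r _ => by rw [ih]

lemma Dm_Ew : ∀ {n : ℕ} (a : Fin n → ι),
    Dm (Ew Rm a) = ∑ c : Fin n → Option ι, Lw Rm c ⊗ₜ[k] Rw Rm c a := by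
  intro n
  induction n with
  | zero =>
    intro a
    rw [show Ew Rm a = 1 by rw [Ew, List.ofFn_zero, List.prod_nil], _root_.map_one,
      Fintype.sum_unique (fun c : Fin 0 → Option ι => Lw Rm c ⊗ₜ[k] Rw Rm c a),
      Lw, Rw, List.ofFn_zero, List.ofFn_zero, List.prod_nil]
    exact Algebra.TensorProduct.one_def
  | succ n ih =>
    intro a
    have hsplit : Ew Rm a = eM k ι Rm (a 0) * Ew Rm (fun s => a s.succ) := by
      rw [Ew, List.ofFn_succ, List.prod_cons]; rfl
    have hLcons : ∀ (o : Option ι) (c' : Fin n → Option ι),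
        Lw Rm (Fin.cons o c') = Lgen Rm o * Lw Rm c' := by
      intro o c'
      rw [Lw, List.ofFn_succ, List.prod_cons]
      simp only [Fin.cons_zero, Fin.cons_succ]
      rfl
    have hRcons : ∀ (o : Option ι) (c' : Fin n → Option ι),
        Rw Rm (Fin.cons o c') a = Rgen Rm o (a 0) * Rw Rm c' (fun s => a s.succ) := by
      intro o c'
      rw [Rw, List.ofFn_succ, List.prod_cons]
      simp only [Fin.cons_zero, Fin.cons_succ]
      rfl
    rw [hsplit, _root_.map_mul, hp.comul_e, ih]
    rw [← Equiv.sum_comp (Fin.consEquiv (fun _ : Fin (n + 1) => Option ι))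
      (fun c : Fin (n + 1) → Option ι => Lw Rm c ⊗ₜ[k] Rw Rm c a)]
    rw [Fintype.sum_prod_type]
    simp only [Fin.consEquiv, Equiv.coe_fn_mk]
    rw [Fintype.sum_option (fun o => ∑ c' : Fin n → Option ι,
      Lw Rm (Fin.cons o c') ⊗ₜ[k] Rw Rm (Fin.cons o c') a)]
    simp only [hLcons, hRcons]
    simp only [show ∀ m' : ι, Lgen Rm (some m') = eM k ι Rm m' from fun _ => rfl,
      show Lgen Rm none = (1 : Yminus k ι Rm) from rfl,
      show ∀ m' : ι, Rgen Rm (some m') (a 0) = tM k ι Rm m' (a 0) from fun _ => rfl,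
      show Rgen Rm none (a 0) = eM k ι Rm (a 0) from rfl, one_mul]
    rw [add_mul, Finset.sum_mul]
    simp only [Finset.mul_sum, Algebra.TensorProduct.tmul_mul_tmul, one_mul]
    rw [add_comm]

lemma main_induction (B : Matrix (ι × ι) (ι × ι) k)
    (hB : ∀ x y z w : ι, B (x, y) (z, w) = Rm (y, x) (z, w)) :
    ∀ n : ℕ,
      (∀ q a : Fin n → ι, p (Fw Rm q) (Ew Rm a) = braidedFactorial B n q a) ∧
      (∀ L : ℕ, n < L → ∀ (q : Fin n → ι) (a : Fin L → ι), p (Fw Rm q) (Ew Rm a) = 0) := by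
  intro n
  induction n with
  | zero =>
    constructor
    · intro q a
      rw [show Fw Rm q = 1 by rw [Fw, List.ofFn_zero, List.prod_nil],
        show Ew Rm a = 1 by rw [Ew, List.ofFn_zero, List.prod_nil], hp.pair_one_one]
      have hqa : q = a := funext fun s => s.elim0
      rw [show braidedFactorial B 0 = (1 : Matrix (Fin 0 → ι) (Fin 0 → ι) k) from rfl, hqa,
        Matrix.one_apply_eq]
    · intro L hL q a
      obtain ⟨L', rfl⟩ : ∃ L', L = L' + 1 := ⟨L - 1, by omega⟩
      rw [show Fw Rm q = 1 by rw [Fw, List.ofFn_zero, List.prod_nil]]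
      rw [show Ew Rm a = eM k ι Rm (a 0) * Ew Rm (fun s => a s.succ) by
        rw [Ew, List.ofFn_succ, List.prod_cons]; rfl]
      rw [pair_one_mul hp, hp.pair_one_e, zero_mul]
  | succ n ih =>
    obtain ⟨ihA, ihZ⟩ := ih
    have hFw : ∀ q : Fin (n + 1) → ι,
        Fw Rm q = Fw Rm (Fin.init q) * fP k ι Rm (q (Fin.last n)) := by
      intro q
      rw [Fw, List.ofFn_succ', List.prod_concat]; rfl
    have EXP : ∀ (q : Fin (n + 1) → ι) (L : ℕ) (a : Fin L → ι),
        p (Fw Rm q) (Ew Rm a)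
          = ∑ c : Fin L → Option ι,
              p (Fw Rm (Fin.init q)) (Lw Rm c) * valF Rm L (q (Fin.last n)) c a := by
      intro q L a
      rw [hFw q, hp.skew_mul, Dm_Ew hp, map_sum]
      exact Finset.sum_congr rfl fun c _ => by
        rw [tensorPairing_tmul, pair_f_Rw hp]
    have opt_extract : ∀ (o : Option ι), o ≠ none → ∃ v, o = some v := fun o h =>
      o.eq_none_or_eq_some.resolve_left h
    constructor
    · intro q a
      rw [EXP q (n + 1) a]
      rw [sum_phiN_eq (fun c => p (Fw Rm (Fin.init q)) (Lw Rm c)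
          * valF Rm (n + 1) (q (Fin.last n)) c a) ?_ ?_]
      rotate_left
      · intro c hc
        choose m hm using fun s => opt_extract (c s) (hc s)
        rw [show Lw Rm c = Ew Rm m by
          rw [Lw, Ew]; exact congrArg _ (congrArg _ (funext fun s => by rw [hm s]; rfl))]
        rw [ihZ (n + 1) (by omega) _ m, zero_mul]
      · intro c s₁ s₂ hne h1 h2
        rw [valF_two_none _ c a s₁ s₂ hne h1 h2, mul_zero]
      rw [bF_succ_expand B q a]
      refine Finset.sum_congr rfl fun j _ => Finset.sum_congr rfl fun m _ => ?_
      have hLw : Lw Rm (phiN j m) = Ew Rm m := by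
        rw [Lw, prod_ofFn_erase_one j _ (by rw [phiN_apply_same]; rfl), Ew]
        exact congrArg _ (congrArg _ (funext fun s => by rw [phiN_apply_succAbove]; rfl))
      rw [hLw, ihA (Fin.init q) m, star_lemma Rm B hB n j m (q (Fin.last n)) a]
    · intro L hL q a
      obtain ⟨L', rfl⟩ : ∃ L', L = L' + 1 := ⟨L - 1, by omega⟩
      rw [EXP q (L' + 1) a]
      apply Finset.sum_eq_zero
      intro c _
      by_cases h2 : ∃ s₁ s₂, s₁ ≠ s₂ ∧ c s₁ = none ∧ c s₂ = none
      · obtain ⟨s₁, s₂, hne, hc1, hc2⟩ := h2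
        rw [valF_two_none _ c a s₁ s₂ hne hc1 hc2, mul_zero]
      · by_cases h1 : ∃ s, c s = none
        · obtain ⟨j, hj⟩ := h1
          have hs : ∀ s, c (j.succAbove s) ≠ none := by
            intro s h
            exact h2 ⟨_, j, Fin.succAbove_ne j s, h, hj⟩
          choose m hm using fun s => opt_extract _ (hs s)
          rw [show Lw Rm c = Ew Rm m by
            rw [Lw, prod_ofFn_erase_one j _ (by rw [hj]; rfl), Ew]
            exact congrArg _ (congrArg _ (funext fun s => by rw [hm s]; rfl))]
          rw [ihZ L' (by omega) _ m, zero_mul]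
        · push_neg at h1
          choose m hm using fun s => opt_extract _ (h1 s)
          rw [show Lw Rm c = Ew Rm m by
            rw [Lw, Ew]; exact congrArg _ (congrArg _ (funext fun s => by rw [hm s]; rfl))]
          rw [ihZ (L' + 1) (by omega) _ m, zero_mul]

end AlgebraLemmas

end Stmt13Aux

/-- in the skew-paired Yang-Baxter bialgebras, for every `N ≥ 1`
the pairing of monomials is the braided factorial:
`⟨F^{q₁}⋯F^{q_N}, E_{a₁}⋯E_{a_N}⟩ = ([N!]_B)^{q₁⋯q_N}_{a₁⋯a_N}`,
where `B^{ij}_{mn} = R^{ji}_{mn}`. -/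
theorem stmt13 {k : Type*} [Field k] {ι : Type*} [Fintype ι] [DecidableEq ι]
    (Rm : Matrix (ι × ι) (ι × ι) k) (hinv : IsUnit Rm)
    (hYB : IsYangBaxter k ι Rm)
    (p : Yplus k ι Rm →ₗ[k] Module.Dual k (Yminus k ι Rm))
    (Dm : Yminus k ι Rm →ₐ[k] (Yminus k ι Rm ⊗[k] Yminus k ι Rm))
    (Dp : Yplus k ι Rm →ₐ[k] (Yplus k ι Rm ⊗[k] Yplus k ι Rm))
    (hp : IsYBPairing Rm p Dm Dp)
    (B : Matrix (ι × ι) (ι × ι) k) (hB : B = fun a b => Rm (a.2, a.1) b) :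
    ∀ N : ℕ, 1 ≤ N → ∀ q a : Fin N → ι,
      p ((List.ofFn fun s => fP k ι Rm (q s)).prod)
          ((List.ofFn fun s => eM k ι Rm (a s)).prod) =
        braidedFactorial B N q a := by
  intro N _ q a
  have hB' : ∀ x y z w : ι, B (x, y) (z, w) = Rm (y, x) (z, w) := by
    intro x y z w; rw [hB]
  exact (main_induction hp B hB' N).1 q a
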